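/- The number of spanning trees of the complete graph K_n on n vertices is n^{n−2} (Cayley's formula), derivable by evaluating (1/n)·∏_{χ≠1}(n − ∑_{g∈Γ} χ(g)) = (1/n)·n^{n−1} for any abelian group Γ of order n. -/

import Mathlib

open Function

namespace Cayley

variable {n : ℕ}

/-- A parent function grounded at root `r`. -/
def Grounded (r : Fin n) (f : Fin n → Fin n) : Prop :=
  f r = r ∧ ∀ x, ∃ k, f^[k] x = r

/-- Height of `x`: the least number of `f`-steps to reach `r`. -/
noncomputable def ht (r : Fin n) (f : Fin n → Fin n) (x : Fin n) : ℕ :=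
  letI := Classical.propDecidable (∃ k, f^[k] x = r)
  if h : ∃ k, f^[k] x = r then Nat.find h else 0

lemma ht_spec {r : Fin n} {f : Fin n → Fin n} {x : Fin n} (h : ∃ k, f^[k] x = r) :
    f^[ht r f x] x = r := by
  unfold ht
  letI := Classical.propDecidable (∃ k, f^[k] x = r)
  rw [dif_pos h]; exact Nat.find_spec h

lemma ht_le {r : Fin n} {f : Fin n → Fin n} {x : Fin n} {k : ℕ} (hk : f^[k] x = r) :
    ht r f x ≤ k := by
  unfold ht
  letI := Classical.propDecidable (∃ k, f^[k] x = r)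
  rw [dif_pos ⟨k, hk⟩]; exact Nat.find_le hk

lemma ht_eq_zero_iff {r : Fin n} {f : Fin n → Fin n} {x : Fin n} (h : ∃ k, f^[k] x = r) :
    ht r f x = 0 ↔ x = r := by
  constructor
  · intro h0
    have := ht_spec h
    rwa [h0, iterate_zero_apply] at this
  · rintro rfl
    exact Nat.le_zero.mp (ht_le (iterate_zero_apply _ _))

lemma Grounded.fx_ne {r : Fin n} {f : Fin n → Fin n} (hg : Grounded r f) {x : Fin n}
    (hx : x ≠ r) : f x ≠ x := by
  intro hfx
  obtain ⟨k, hk⟩ := hg.2 x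
  have : f^[k] x = x := iterate_fixed hfx k
  exact hx (by rw [← hk, this])

lemma ht_fx {r : Fin n} {f : Fin n → Fin n} (hf : ∀ x, ∃ k, f^[k] x = r) {x : Fin n}
    (hx : x ≠ r) : ht r f x = ht r f (f x) + 1 := by
  have h1 : ht r f x ≠ 0 := fun h0 => hx ((ht_eq_zero_iff (hf x)).mp h0)
  have hs := ht_spec (hf x)
  have h2 : f^[ht r f x - 1] (f x) = r := by
    rw [← iterate_succ_apply, Nat.succ_eq_add_one, Nat.sub_add_cancel (Nat.one_le_iff_ne_zero.mpr h1)]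
    exact hs
  have h3 : ht r f (f x) ≤ ht r f x - 1 := ht_le h2
  have h4 : ht r f x ≤ ht r f (f x) + 1 := ht_le (by rw [iterate_succ_apply]; exact ht_spec (hf (f x)))
  omega

lemma Grounded.ht_edge {r : Fin n} {f : Fin n → Fin n} (hg : Grounded r f) {x y : Fin n}
    (hxy : f x = y) (hne : x ≠ y) : ht r f x = ht r f y + 1 := by
  have hx : x ≠ r := by rintro rfl; exact hne (by rw [← hxy, hg.1])
  rw [ht_fx hg.2 hx, hxy]

/-- The graph associated to a parent function. -/
def Gf (f : Fin n → Fin n) : SimpleGraph (Fin n) where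
  Adj x y := x ≠ y ∧ (f x = y ∨ f y = x)
  symm := by
    refine ⟨?_⟩
    intro x y ⟨h1, h2⟩
    exact ⟨h1.symm, h2.symm⟩
  loopless := by refine ⟨?_⟩; intro x ⟨h1, _⟩; exact h1 rfl

lemma gf_adj {f : Fin n → Fin n} {x y : Fin n} :
    (Gf f).Adj x y ↔ x ≠ y ∧ (f x = y ∨ f y = x) := Iff.rfl

lemma gf_reach {r : Fin n} {f : Fin n → Fin n} (hg : Grounded r f) (x : Fin n) :
    (Gf f).Reachable x r := by
  obtain ⟨k, hk⟩ := hg.2 x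
  induction k generalizing x with
  | zero => rw [iterate_zero_apply] at hk; exact hk ▸ SimpleGraph.Reachable.refl x
  | succ k ih =>
    by_cases hx : x = r
    · exact hx ▸ SimpleGraph.Reachable.refl x
    · have hadj : (Gf f).Adj x (f x) := ⟨(hg.fx_ne hx).symm, Or.inl rfl⟩
      exact hadj.reachable.trans (ih (f x) (by rwa [← iterate_succ_apply]))

lemma gf_connected {r : Fin n} {f : Fin n → Fin n} (hg : Grounded r f) :
    (Gf f).Connected := by
  rw [SimpleGraph.connected_iff]
  exact ⟨fun x y => (gf_reach hg x).trans (gf_reach hg y).symm, ⟨r⟩⟩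
lemma gf_acyclic {r : Fin n} {f : Fin n → Fin n} (hg : Grounded r f) :
    (Gf f).IsAcyclic := by
  intro v c hc
  classical
  -- pick a vertex of maximal height on the cycle
  obtain ⟨u, hu_mem, hu_max⟩ := Finset.exists_max_image c.support.toFinset (ht r f)
    ⟨v, List.mem_toFinset.mpr c.start_mem_support⟩
  rw [List.mem_toFinset] at hu_mem
  set c' := c.rotate u hu_mem with hc'def
  have hcyc : c'.IsCycle := hc.rotate hu_mem
  have hmem : ∀ y ∈ c'.support, ht r f y ≤ ht r f u := by
    intro y hy
    apply hu_max
    rw [List.mem_toFinset]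
    rcases (SimpleGraph.Walk.mem_support_iff _).mp hy with h | h
    · exact h ▸ hu_mem
    · have := (SimpleGraph.Walk.support_rotate c u hu_mem).symm.mem_iff.mpr h
      exact List.mem_of_mem_tail this
  have key : ∀ y, (Gf f).Adj u y → y ∈ c'.support → f u = y := by
    intro y hadj hy
    rcases hadj.2 with h | h
    · exact h
    · exfalso
      have h1 : ht r f y = ht r f u + 1 := hg.ht_edge h hadj.1.symm
      have h2 := hmem y hy
      omega
  have hnil : ¬ c'.Nil := hcyc.not_nil
  obtain ⟨y, hy, q, hq⟩ := SimpleGraph.Walk.not_nil_iff.mp hnil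
  have hnil2 : ¬ c'.reverse.Nil := by
    rw [SimpleGraph.Walk.nil_iff_length_eq, SimpleGraph.Walk.length_reverse]
    rw [SimpleGraph.Walk.nil_iff_length_eq] at hnil
    exact hnil
  obtain ⟨z, hz, q2, hq2⟩ := SimpleGraph.Walk.not_nil_iff.mp hnil2
  have hyc : y ∈ c'.support := by
    rw [hq, SimpleGraph.Walk.support_cons]
    exact List.mem_cons_of_mem _ q.start_mem_support
  have hzc : z ∈ c'.support := by
    have : z ∈ c'.reverse.support := by
      rw [hq2, SimpleGraph.Walk.support_cons]
      exact List.mem_cons_of_mem _ q2.start_mem_support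
    rwa [SimpleGraph.Walk.support_reverse, List.mem_reverse] at this
  have h1 : f u = y := key y hy hyc
  have h2 : f u = z := key z hz hzc
  have hyz : y = z := by rw [← h1, h2]
  -- now derive a contradiction from the edge list being duplicate-free
  have hedge : c'.edges = s(u, y) :: q.edges := by rw [hq, SimpleGraph.Walk.edges_cons]
  have hedge2 : c'.edges.reverse = s(u, z) :: q2.edges := by
    rw [← SimpleGraph.Walk.edges_reverse, hq2, SimpleGraph.Walk.edges_cons]
  have hnodup : c'.edges.Nodup := hcyc.edges_nodup
  have hlen : 3 ≤ c'.length := hcyc.three_le_length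
  have hqlen : 2 ≤ q.edges.length := by
    have : c'.edges.length = c'.length := SimpleGraph.Walk.length_edges c'
    rw [hedge] at this
    simp only [List.length_cons] at this
    omega
  obtain ⟨e0, es, hqe⟩ : ∃ e0 es, q.edges.reverse = e0 :: es := by
    cases hqq : q.edges.reverse with
    | nil =>
      exfalso
      rw [List.reverse_eq_nil_iff] at hqq
      rw [hqq] at hqlen
      simp at hqlen
    | cons e0 es => exact ⟨e0, es, rfl⟩
  have hrev : c'.edges.reverse = e0 :: (es ++ [s(u, y)]) := by
    rw [hedge, List.reverse_cons, hqe]; simp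
  have he0 : e0 = s(u, z) := by
    rw [hedge2] at hrev
    exact (List.cons.injEq _ _ _ _ ▸ hrev).1.symm
  have he0mem : e0 ∈ q.edges := by
    rw [← List.mem_reverse, hqe]; exact List.mem_cons_self
  rw [hedge] at hnodup
  have : s(u, y) ∉ q.edges := (List.nodup_cons.mp hnodup).1
  apply this
  have heq : s(u, y) = e0 := by rw [he0, hyz]
  exact heq ▸ he0mem

lemma gf_isTree {r : Fin n} {f : Fin n → Fin n} (hg : Grounded r f) :
    (Gf f).IsTree := ⟨gf_connected hg, gf_acyclic hg⟩

/-- The canonical walk from `x` to `r` following `f`. -/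
def walkOfIter {r : Fin n} {f : Fin n → Fin n} (hg : Grounded r f) :
    (k : ℕ) → (x : Fin n) → f^[k] x = r → (Gf f).Walk x r
  | 0, _, h => SimpleGraph.Walk.nil.copy rfl h
  | k + 1, x, h =>
    if hx : x = r then SimpleGraph.Walk.nil.copy rfl hx
    else SimpleGraph.Walk.cons
      (show (Gf f).Adj x (f x) from ⟨(hg.fx_ne hx).symm, Or.inl rfl⟩)
      (walkOfIter hg k (f x) (by rwa [← iterate_succ_apply]))

lemma walkOfIter_ht_le {r : Fin n} {f : Fin n → Fin n} (hg : Grounded r f) :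
    ∀ (k : ℕ) (x : Fin n) (h : f^[k] x = r) (y : Fin n),
      y ∈ (walkOfIter hg k x h).support → ht r f y ≤ ht r f x := by
  intro k
  induction k with
  | zero =>
    intro x h y hy
    simp only [walkOfIter, SimpleGraph.Walk.support_copy, SimpleGraph.Walk.support_nil,
      List.mem_singleton] at hy
    have e := SimpleGraph.Walk.support_copy (G := Gf f) SimpleGraph.Walk.nil rfl (show x = r from h)
    rw [SimpleGraph.Walk.support_nil] at e
    have hy' : y = x := List.mem_singleton.mp (e ▸ hy)
    exact hy' ▸ le_refl _
  | succ k ih =>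
    intro x h y hy
    rw [walkOfIter] at hy
    by_cases hx : x = r
    · rw [dif_pos hx] at hy
      simp only [SimpleGraph.Walk.support_copy, SimpleGraph.Walk.support_nil,
        List.mem_singleton] at hy
      exact hy ▸ le_refl _
    · rw [dif_neg hx, SimpleGraph.Walk.support_cons] at hy
      rcases List.mem_cons.mp hy with h' | h'
      · exact h' ▸ le_refl _
      · have := ih (f x) (by rwa [← iterate_succ_apply]) y h'
        have h2 := ht_fx hg.2 hx
        omega

lemma walkOfIter_isPath {r : Fin n} {f : Fin n → Fin n} (hg : Grounded r f) :
    ∀ (k : ℕ) (x : Fin n) (h : f^[k] x = r), (walkOfIter hg k x h).IsPath := by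
  intro k
  induction k with
  | zero =>
    intro x h
    simp only [walkOfIter, SimpleGraph.Walk.isPath_copy]
    exact (SimpleGraph.Walk.isPath_copy _ _ _).mpr SimpleGraph.Walk.IsPath.nil
  | succ k ih =>
    intro x h
    rw [walkOfIter]
    by_cases hx : x = r
    · rw [dif_pos hx]
      simp only [SimpleGraph.Walk.isPath_copy]
      exact SimpleGraph.Walk.IsPath.nil
    · rw [dif_neg hx]
      rw [SimpleGraph.Walk.cons_isPath_iff]
      refine ⟨ih _ _, fun hmem => ?_⟩
      have h1 := walkOfIter_ht_le hg k (f x) (by rwa [← iterate_succ_apply]) x hmem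
      have h2 := ht_fx hg.2 hx
      omega

lemma walkOfIter_getVert1 {r : Fin n} {f : Fin n → Fin n} (hg : Grounded r f)
    (k : ℕ) (x : Fin n) (h : f^[k] x = r) (hx : x ≠ r) :
    (walkOfIter hg k x h).getVert 1 = f x := by
  cases k with
  | zero => exact absurd h hx
  | succ k =>
    rw [walkOfIter, dif_neg hx]
    rw [SimpleGraph.Walk.getVert_cons_succ, SimpleGraph.Walk.getVert_zero]

/-- The unique path from `x` to `r` in a tree. -/
noncomputable def pathTo {T : SimpleGraph (Fin n)} (hT : T.IsTree) (r x : Fin n) :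
    T.Walk x r := (hT.existsUnique_path x r).choose

lemma pathTo_isPath {T : SimpleGraph (Fin n)} (hT : T.IsTree) (r x : Fin n) :
    (pathTo hT r x).IsPath := (hT.existsUnique_path x r).choose_spec.1

lemma pathTo_unique {T : SimpleGraph (Fin n)} (hT : T.IsTree) {r x : Fin n}
    (q : T.Walk x r) (hq : q.IsPath) : q = pathTo hT r x :=
  (hT.existsUnique_path x r).choose_spec.2 q hq

/-- The parent map of a tree with root `r`. -/
noncomputable def par (T : SimpleGraph (Fin n)) (hT : T.IsTree) (r x : Fin n) : Fin n :=
  (pathTo hT r x).getVert 1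

lemma pathTo_self {T : SimpleGraph (Fin n)} (hT : T.IsTree) (r : Fin n) :
    pathTo hT r r = SimpleGraph.Walk.nil := by
  symm
  exact pathTo_unique hT SimpleGraph.Walk.nil SimpleGraph.Walk.IsPath.nil

lemma par_self {T : SimpleGraph (Fin n)} (hT : T.IsTree) (r : Fin n) :
    par T hT r r = r := by
  rw [par, pathTo_self]
  rfl

lemma pathTo_not_nil {T : SimpleGraph (Fin n)} (hT : T.IsTree) {r x : Fin n} (hx : x ≠ r) :
    ¬ (pathTo hT r x).Nil := SimpleGraph.Walk.not_nil_of_ne hx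

lemma par_adj {T : SimpleGraph (Fin n)} (hT : T.IsTree) {r x : Fin n} (hx : x ≠ r) :
    T.Adj x (par T hT r x) :=
  SimpleGraph.Walk.adj_snd (pathTo_not_nil hT hx)

lemma pathTo_par {T : SimpleGraph (Fin n)} (hT : T.IsTree) {r x : Fin n} (hx : x ≠ r) :
    pathTo hT r (par T hT r x) = (pathTo hT r x).tail := by
  symm
  exact pathTo_unique hT _ ((pathTo_isPath hT r x).tail)

lemma pathTo_par_length {T : SimpleGraph (Fin n)} (hT : T.IsTree) {r x : Fin n} (hx : x ≠ r) :
    (pathTo hT r (par T hT r x)).length + 1 = (pathTo hT r x).length := by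
  rw [pathTo_par hT hx]
  exact SimpleGraph.Walk.length_tail_add_one (pathTo_not_nil hT hx)

lemma par_grounded {T : SimpleGraph (Fin n)} (hT : T.IsTree) (r : Fin n) :
    Grounded r (par T hT r) := by
  refine ⟨par_self hT r, fun x => ?_⟩
  generalize hL : (pathTo hT r x).length = L
  induction L using Nat.strong_induction_on generalizing x with
  | _ L ih =>
    by_cases hx : x = r
    · exact ⟨0, hx⟩
    · have hlen := pathTo_par_length hT hx
      obtain ⟨k, hk⟩ := ih (pathTo hT r (par T hT r x)).length (by omega) (par T hT r x) rfl
      exact ⟨k + 1, by rwa [iterate_succ_apply]⟩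

lemma par_eq_of_cons {T : SimpleGraph (Fin n)} (hT : T.IsTree) {r x y : Fin n}
    (hadj : T.Adj x y) (q : T.Walk y r) (hq : (SimpleGraph.Walk.cons hadj q).IsPath) :
    par T hT r x = y := by
  rw [par, ← pathTo_unique hT _ hq]
  rw [SimpleGraph.Walk.getVert_cons_succ, SimpleGraph.Walk.getVert_zero]

lemma gf_par {T : SimpleGraph (Fin n)} (hT : T.IsTree) (r : Fin n) :
    Gf (par T hT r) = T := by
  ext x y
  rw [gf_adj]
  constructor
  · rintro ⟨hne, h | h⟩
    · have hx : x ≠ r := by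
        rintro rfl
        exact hne (by rw [← h, par_self])
      exact h ▸ par_adj hT hx
    · have hy : y ≠ r := by
        rintro rfl
        exact hne (by rw [← h, par_self])
      exact (h ▸ par_adj hT hy).symm
  · intro hadj
    refine ⟨hadj.ne, ?_⟩
    by_cases h1 : y ∈ (pathTo hT r x).support
    · -- then the path from y is the dropUntil, x is not on it, so par x = y
      left
      have hdrop : pathTo hT r y = (pathTo hT r x).dropUntil y h1 :=
        (pathTo_unique hT _ ((pathTo_isPath hT r x).dropUntil h1)).symm
      have hx_not : x ∉ (pathTo hT r y).support := by
        rw [hdrop]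
        intro hx_in
        have hnodup := (pathTo_isPath hT r x).support_nodup
        rw [← SimpleGraph.Walk.take_spec (pathTo hT r x) h1,
          SimpleGraph.Walk.support_append] at hnodup
        have hdisj := List.disjoint_of_nodup_append hnodup
        have hx_take : x ∈ ((pathTo hT r x).takeUntil y h1).support :=
          SimpleGraph.Walk.start_mem_support _
        rcases (SimpleGraph.Walk.mem_support_iff _).mp hx_in with h' | h'
        · exact hadj.ne h'
        · exact hdisj hx_take h'
      exact par_eq_of_cons hT hadj (pathTo hT r y)
        (SimpleGraph.Walk.cons_isPath_iff _ _ |>.mpr ⟨pathTo_isPath hT r y, hx_not⟩)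
    · right
      exact par_eq_of_cons hT hadj.symm (pathTo hT r x)
        (SimpleGraph.Walk.cons_isPath_iff _ _ |>.mpr ⟨pathTo_isPath hT r x, h1⟩)

lemma par_gf {r : Fin n} {f : Fin n → Fin n} (hg : Grounded r f) :
    par (Gf f) (gf_isTree hg) r = f := by
  funext x
  by_cases hx : x = r
  · rw [hx, par_self, hg.1]
  · obtain ⟨k, hk⟩ := hg.2 x
    have hw : walkOfIter hg k x hk = pathTo (gf_isTree hg) r x :=
      pathTo_unique (gf_isTree hg) _ (walkOfIter_isPath hg k x hk)
    rw [par, ← hw, walkOfIter_getVert1 hg k x hk hx]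

/-- Step A: trees on `Fin n` are in bijection with functions grounded at `r`. -/
noncomputable def treeEquivGrounded (r : Fin n) :
    {T : SimpleGraph (Fin n) // T.IsTree} ≃ {f : Fin n → Fin n // Grounded r f} where
  toFun T := ⟨par T.1 T.2 r, par_grounded T.2 r⟩
  invFun f := ⟨Gf f.1, gf_isTree f.2⟩
  left_inv T := Subtype.ext (gf_par T.2 r)
  right_inv f := Subtype.ext (par_gf f.2)

/-! ### Periodic points of an endofunction -/

/-- The set of periodic points of `g`. -/
noncomputable def perSet (g : Fin n → Fin n) : Finset (Fin n) :=
  Finset.univ.filter fun x =>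
    letI := Classical.propDecidable (∃ k, 0 < k ∧ g^[k] x = x)
    decide (∃ k, 0 < k ∧ g^[k] x = x)

lemma mem_perSet {g : Fin n → Fin n} {x : Fin n} :
    x ∈ perSet g ↔ ∃ k, 0 < k ∧ g^[k] x = x := by
  classical
  simp only [perSet, Finset.mem_filter, Finset.mem_univ, true_and, decide_eq_true_eq]

lemma periodic_mul {g : Fin n → Fin n} {x : Fin n} {k : ℕ} (hk : g^[k] x = x) (m : ℕ) :
    g^[k * m] x = x := by
  rw [iterate_mul]
  exact iterate_fixed hk m

lemma perSet_maps {g : Fin n → Fin n} {x : Fin n} (hx : x ∈ perSet g) : g x ∈ perSet g := by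
  rw [mem_perSet] at hx ⊢
  obtain ⟨k, hk0, hk⟩ := hx
  exact ⟨k, hk0, by rw [← iterate_succ_apply, iterate_succ_apply', hk]⟩

lemma perSet_injOn {g : Fin n → Fin n} {x y : Fin n} (hx : x ∈ perSet g) (hy : y ∈ perSet g)
    (hxy : g x = g y) : x = y := by
  rw [mem_perSet] at hx hy
  obtain ⟨k, hk0, hk⟩ := hx
  obtain ⟨l, hl0, hl⟩ := hy
  have hK : 0 < k * l := Nat.mul_pos hk0 hl0
  have h1 : g^[k * l] x = x := periodic_mul hk l
  have h2 : g^[k * l] y = y := by rw [mul_comm]; exact periodic_mul hl k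
  calc x = g^[k * l] x := h1.symm
    _ = g^[k * l - 1] (g x) := by rw [← iterate_succ_apply, Nat.succ_eq_add_one, Nat.sub_add_cancel hK]
    _ = g^[k * l - 1] (g y) := by rw [hxy]
    _ = g^[k * l] y := by rw [← iterate_succ_apply, Nat.succ_eq_add_one, Nat.sub_add_cancel hK]
    _ = y := h2

lemma perSet_surjOn {g : Fin n → Fin n} {y : Fin n} (hy : y ∈ perSet g) :
    ∃ x ∈ perSet g, g x = y := by
  rw [mem_perSet] at hy
  obtain ⟨k, hk0, hk⟩ := hy
  refine ⟨g^[k - 1] y, ?_, ?_⟩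
  · rw [mem_perSet]
    refine ⟨k, hk0, ?_⟩
    rw [← iterate_add_apply, Nat.add_comm, iterate_add_apply, hk]
  · rw [show g (g^[k - 1] y) = g^[k - 1 + 1] y from (iterate_succ_apply' g _ y).symm,
      Nat.sub_add_cancel hk0, hk]

lemma orbit_meets_perSet (g : Fin n → Fin n) (x : Fin n) (_hn : 0 < n) :
    ∃ m, g^[m] x ∈ perSet g := by
  have hcard : Fintype.card (Fin n) < Fintype.card (Fin (n + 1)) := by simp
  obtain ⟨i, j, hij, heq⟩ := Fintype.exists_ne_map_eq_of_card_lt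
    (fun i : Fin (n + 1) => g^[i.1] x) hcard
  rcases Ne.lt_or_gt hij with h | h
  · refine ⟨i.1, mem_perSet.mpr ⟨j.1 - i.1, by omega, ?_⟩⟩
    rw [← iterate_add_apply, Nat.sub_add_cancel (le_of_lt h)]
    exact heq.symm
  · refine ⟨j.1, mem_perSet.mpr ⟨i.1 - j.1, by omega, ?_⟩⟩
    rw [← iterate_add_apply, Nat.sub_add_cancel (le_of_lt h)]
    exact heq

/-- Cancellation: if `g` maps `P` into itself injectively, then all points of `P`
iterate within `P` and `g`-iterates can be cancelled. -/
lemma iterate_mem {g : Fin n → Fin n} {P : Finset (Fin n)} (hmaps : ∀ x ∈ P, g x ∈ P)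
    {x : Fin n} (hx : x ∈ P) (m : ℕ) : g^[m] x ∈ P := by
  induction m with
  | zero => exact hx
  | succ m ih => rw [iterate_succ_apply']; exact hmaps _ ih

lemma injOn_iterate_cancel {g : Fin n → Fin n} {P : Finset (Fin n)}
    (hmaps : ∀ x ∈ P, g x ∈ P) (hinj : ∀ x ∈ P, ∀ y ∈ P, g x = g y → x = y)
    {a b : Fin n} (ha : a ∈ P) (hb : b ∈ P) (m : ℕ) (h : g^[m] a = g^[m] b) : a = b := by
  induction m with
  | zero => exact h
  | succ m ih =>
    rw [iterate_succ_apply', iterate_succ_apply'] at h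
    exact ih (hinj _ (iterate_mem hmaps ha m) _ (iterate_mem hmaps hb m) h)

/-- If `g` is an injective self-map of `P`, then every point of `P` is periodic. -/
lemma mem_perSet_of_invariant {g : Fin n → Fin n} {P : Finset (Fin n)}
    (hmaps : ∀ x ∈ P, g x ∈ P) (hinj : ∀ x ∈ P, ∀ y ∈ P, g x = g y → x = y)
    {x : Fin n} (hx : x ∈ P) : x ∈ perSet g := by

  obtain ⟨i, j, hij, heq⟩ := Fintype.exists_ne_map_eq_of_card_lt
    (fun i : Fin (n + 1) => g^[i.1] x) (by simp)
  wlog h : i < j generalizing i j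
  · exact this j i hij.symm heq.symm (by omega)
  rw [mem_perSet]
  refine ⟨j.1 - i.1, by omega, ?_⟩
  refine injOn_iterate_cancel hmaps hinj (iterate_mem hmaps hx _) hx i.1 ?_
  rw [← iterate_add_apply, Nat.add_sub_cancel' (le_of_lt h)]
  exact heq.symm

/-- If `x ∉ P`, `P` is `g`-invariant, and `x` is periodic, the orbit of `x` avoids `P`. -/
lemma orbit_avoids {g : Fin n → Fin n} {P : Finset (Fin n)} (hmaps : ∀ x ∈ P, g x ∈ P)
    {x : Fin n} (hxP : x ∉ P) (hx : x ∈ perSet g) (m : ℕ) : g^[m] x ∉ P := by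
  rw [mem_perSet] at hx
  obtain ⟨k, hk0, hk⟩ := hx
  intro hmem
  apply hxP
  have h1 : g^[m * k] x ∈ P := by
    have : ∀ j, g^[m + j] x ∈ P := fun j => by
      rw [Nat.add_comm, iterate_add_apply]
      exact iterate_mem hmaps hmem j
    have hle : m ≤ m * k := Nat.le_mul_of_pos_right m hk0
    have := this (m * k - m)
    rwa [Nat.add_sub_cancel' hle] at this
  rwa [mul_comm, periodic_mul hk m] at h1

/-! ### The middle type of Joyal's bijection -/

/-- The middle type: a finset `P`, an enumeration-valued map, and a function fixing `P`
whose orbits all enter `P`. -/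
def Mid (n : ℕ) : Type :=
  Σ P : Finset (Fin n), (Fin P.card ≃ {x // x ∈ P}) ×
    {h : Fin n → Fin n // (∀ x ∈ P, h x = x) ∧ ∀ x, ∃ m, h^[m] x ∈ P}

lemma mid_ext {P P' : Finset (Fin n)}
    {e : Fin P.card ≃ {x // x ∈ P}} {e' : Fin P'.card ≃ {x // x ∈ P'}}
    {h : {h : Fin n → Fin n // (∀ x ∈ P, h x = x) ∧ ∀ x, ∃ m, h^[m] x ∈ P}}
    {h' : {h : Fin n → Fin n // (∀ x ∈ P', h x = x) ∧ ∀ x, ∃ m, h^[m] x ∈ P'}}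
    (hP : P = P')
    (he : ∀ (i : ℕ) (hi : i < P.card) (hi' : i < P'.card), (e ⟨i, hi⟩).1 = (e' ⟨i, hi'⟩).1)
    (hh : h.1 = h'.1) : (⟨P, e, h⟩ : Mid n) = ⟨P', e', h'⟩ := by
  subst hP
  refine congrArg (Sigma.mk P) (Prod.ext ?_ (Subtype.ext hh))
  exact Equiv.ext fun i => Subtype.ext (he i.1 i.2 i.2)

lemma orderIsoOfFin_congr {P P' : Finset (Fin n)} (hP : P = P') (i : ℕ)
    (hi : i < P.card) (hi' : i < P'.card) :
    ((P.orderIsoOfFin rfl) ⟨i, hi⟩).1 = ((P'.orderIsoOfFin rfl) ⟨i, hi'⟩).1 := by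
  subst hP; rfl

/-- The permutation of `perSet g` induced by `g`. -/
noncomputable def permEquiv (g : Fin n → Fin n) : {x // x ∈ perSet g} ≃ {x // x ∈ perSet g} :=
  Equiv.ofBijective (fun x => ⟨g x.1, perSet_maps x.2⟩)
    (Finite.injective_iff_bijective.mp fun a b hab =>
      Subtype.ext (perSet_injOn a.2 b.2 (congrArg Subtype.val hab)))

/-- The function `g` with its periodic points frozen. -/
noncomputable def hA (g : Fin n → Fin n) : Fin n → Fin n := fun x =>
  if x ∈ perSet g then x else g x

lemma hA_reach_aux (g : Fin n → Fin n) :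
    ∀ m x, g^[m] x ∈ perSet g → ∃ m', (hA g)^[m'] x ∈ perSet g := by
  intro m
  induction m with
  | zero => intro x hx; exact ⟨0, hx⟩
  | succ m ih =>
    intro x hx
    by_cases hxp : x ∈ perSet g
    · exact ⟨0, hxp⟩
    · obtain ⟨m', hm'⟩ := ih (g x) (by rwa [← iterate_succ_apply])
      refine ⟨m' + 1, ?_⟩
      rwa [iterate_succ_apply, show hA g x = g x from if_neg hxp]

/-- Joyal, side A: endofunctions are classified by the middle type. -/
noncomputable def equivA (hn : 0 < n) : (Fin n → Fin n) ≃ Mid n where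
  toFun g := ⟨perSet g, (((perSet g).orderIsoOfFin rfl).toEquiv.trans (permEquiv g)),
    ⟨hA g, fun x hx => if_pos hx, fun x => by
      obtain ⟨m, hm⟩ := orbit_meets_perSet g x hn
      exact hA_reach_aux g m x hm⟩⟩
  invFun M := fun x =>
    if hx : x ∈ M.1 then (M.2.1 ((M.1.orderIsoOfFin rfl).symm ⟨x, hx⟩)).1 else M.2.2.1 x
  left_inv g := by
    funext x
    dsimp only
    by_cases hx : x ∈ perSet g
    · rw [dif_pos hx]
      show (permEquiv g (((perSet g).orderIsoOfFin rfl)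
        (((perSet g).orderIsoOfFin rfl).symm ⟨x, hx⟩))).1 = g x
      rw [OrderIso.apply_symm_apply]
      rfl
    · rw [dif_neg hx]
      exact if_neg hx
  right_inv M := by
    obtain ⟨P, e, h, hfix, hreach⟩ := M
    set g : Fin n → Fin n := fun x =>
      if hx : x ∈ P then (e ((P.orderIsoOfFin rfl).symm ⟨x, hx⟩)).1 else h x with hg
    have gmaps : ∀ x ∈ P, g x ∈ P := by
      intro x hx
      rw [hg]
      simp only [dif_pos hx]
      exact (e ((P.orderIsoOfFin rfl).symm ⟨x, hx⟩)).2
    have gval : ∀ (x : Fin n) (hx : x ∈ P), g x = (e ((P.orderIsoOfFin rfl).symm ⟨x, hx⟩)).1 := by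
      intro x hx; rw [hg]; simp only [dif_pos hx]
    have gvaln : ∀ (x : Fin n), x ∉ P → g x = h x := by
      intro x hx; rw [hg]; simp only [dif_neg hx]
    have ginj : ∀ x ∈ P, ∀ y ∈ P, g x = g y → x = y := by
      intro x hx y hy hxy
      rw [gval x hx, gval y hy] at hxy
      have := ((P.orderIsoOfFin rfl).symm.injective (e.injective (Subtype.ext hxy)))
      exact congrArg Subtype.val this
    have hPer : perSet g = P := by
      apply Finset.Subset.antisymm
      · intro x hx
        by_contra hxP
        have havoid := orbit_avoids gmaps hxP hx
        have hiter : ∀ m, (h : Fin n → Fin n)^[m] x = g^[m] x := by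
          intro m
          induction m with
          | zero => rfl
          | succ m ih =>
            rw [iterate_succ_apply', iterate_succ_apply', ih,
              ← gvaln _ (havoid m)]
        obtain ⟨m, hm⟩ := hreach x
        rw [hiter m] at hm
        exact havoid m hm
      · intro x hx
        exact mem_perSet_of_invariant gmaps ginj hx
    refine mid_ext hPer ?_ ?_
    · intro i hi hi'
      show (permEquiv g (((perSet g).orderIsoOfFin rfl) ⟨i, hi⟩)).1 = (e ⟨i, hi'⟩).1
      show g (((perSet g).orderIsoOfFin rfl) ⟨i, hi⟩).1 = (e ⟨i, hi'⟩).1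
      set v := (((perSet g).orderIsoOfFin rfl) ⟨i, hi⟩).1 with hv
      have hvv : v = ((P.orderIsoOfFin rfl) ⟨i, hi'⟩).1 := orderIsoOfFin_congr hPer i hi hi'
      have hvP : v ∈ P := by rw [hvv]; exact ((P.orderIsoOfFin rfl) ⟨i, hi'⟩).2
      rw [gval v hvP]
      congr 1
      rw [show (⟨v, hvP⟩ : {x // x ∈ P}) = (P.orderIsoOfFin rfl) ⟨i, hi'⟩ from Subtype.ext hvv,
        OrderIso.symm_apply_apply]
    · show hA g = h
      funext x
      by_cases hx : x ∈ P
      · rw [show hA g x = x from if_pos (hPer ▸ hx), hfix x hx]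
      · rw [show hA g x = g x from if_neg (fun hc => hx (hPer ▸ hc)), gvaln x hx]

/-! ### Side B: grounded triples -/

/-- Grounded triples: a marked vertex `b`, a root `r`, and a grounded parent function. -/
def GT (n : ℕ) : Type :=
  {p : Fin n × Fin n × (Fin n → Fin n) // Grounded p.2.1 p.2.2}

section OrbitSide

variable {r : Fin n} {f : Fin n → Fin n}

lemma ht_iterate (hg : Grounded r f) (b : Fin n) :
    ∀ i, i ≤ ht r f b → ht r f (f^[i] b) = ht r f b - i := by
  intro i
  induction i with
  | zero => intro _; rfl
  | succ i ih =>
    intro hi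
    have h1 := ih (by omega)
    have hne : f^[i] b ≠ r := by
      intro hr
      have : ht r f (f^[i] b) = 0 := (ht_eq_zero_iff (hg.2 _)).mpr hr
      omega
    have h2 := ht_fx hg.2 hne
    rw [iterate_succ_apply']
    omega

lemma orb_injOn (hg : Grounded r f) (b : Fin n) {i j : ℕ}
    (hi : i < ht r f b + 1) (hj : j < ht r f b + 1) (hij : f^[i] b = f^[j] b) : i = j := by
  have h1 := ht_iterate hg b i (by omega)
  have h2 := ht_iterate hg b j (by omega)
  rw [hij] at h1
  omega

/-- The orbit of `b` under `f`, as a finset. -/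
noncomputable def orbP (r : Fin n) (f : Fin n → Fin n) (b : Fin n) : Finset (Fin n) :=
  (Finset.range (ht r f b + 1)).image (fun i => f^[i] b)

lemma mem_orbP_iff {b x : Fin n} :
    x ∈ orbP r f b ↔ ∃ i < ht r f b + 1, f^[i] b = x := by
  simp [orbP]

lemma mem_orbP {b : Fin n} (i : ℕ) (hi : i < ht r f b + 1) : f^[i] b ∈ orbP r f b :=
  mem_orbP_iff.mpr ⟨i, hi, rfl⟩

lemma orbP_card (hg : Grounded r f) (b : Fin n) : (orbP r f b).card = ht r f b + 1 := by
  rw [orbP, Finset.card_image_of_injOn, Finset.card_range]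
  intro i hi j hj hij
  exact orb_injOn hg b (Finset.mem_range.mp hi) (Finset.mem_range.mp hj) hij

lemma root_mem_orbP (hg : Grounded r f) (b : Fin n) : r ∈ orbP r f b :=
  mem_orbP_iff.mpr ⟨ht r f b, by omega, ht_spec (hg.2 b)⟩

/-- The enumeration of the orbit. -/
noncomputable def orbEquiv (hg : Grounded r f) (b : Fin n) :
    Fin (orbP r f b).card ≃ {x // x ∈ orbP r f b} :=
  Equiv.ofBijective
    (fun i => ⟨f^[i.1] b, mem_orbP i.1 (by rw [← orbP_card hg]; exact i.2)⟩)
    (by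
      constructor
      · intro i j hij
        exact Fin.ext (orb_injOn hg b
          (by rw [← orbP_card hg]; exact i.2) (by rw [← orbP_card hg]; exact j.2)
          (congrArg Subtype.val hij))
      · rintro ⟨y, hy⟩
        obtain ⟨i, hi, hiy⟩ := mem_orbP_iff.mp hy
        exact ⟨⟨i, by rw [orbP_card hg]; exact hi⟩, Subtype.ext hiy⟩)

/-- The function `f` with the orbit of `b` frozen. -/
noncomputable def hB (r : Fin n) (f : Fin n → Fin n) (b : Fin n) : Fin n → Fin n := fun x =>
  if x ∈ orbP r f b then x else f x

lemma hB_reach (hg : Grounded r f) (b : Fin n) :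
    ∀ k x, f^[k] x = r → ∃ m, (hB r f b)^[m] x ∈ orbP r f b := by
  intro k
  induction k with
  | zero =>
    intro x hx
    rw [iterate_zero_apply] at hx
    exact ⟨0, by rw [iterate_zero_apply, hx]; exact root_mem_orbP hg b⟩
  | succ k ih =>
    intro x hx
    by_cases hxP : x ∈ orbP r f b
    · exact ⟨0, hxP⟩
    · obtain ⟨m, hm⟩ := ih (f x) (by rwa [← iterate_succ_apply])
      exact ⟨m + 1, by rwa [iterate_succ_apply, show hB r f b x = f x from if_neg hxP]⟩

end OrbitSide

section InvSide

variable {P : Finset (Fin n)} (e : Fin P.card ≃ {x // x ∈ P}) (h : Fin n → Fin n)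

/-- Successor along the enumeration `e`, fixing the last element. -/
noncomputable def nextP (y : {x // x ∈ P}) : Fin n :=
  if hlt : ((e.symm y) : Fin P.card).1 + 1 < P.card then (e ⟨(e.symm y).1 + 1, hlt⟩).1 else y.1

/-- The parent function built from the data `(P, e, h)`. -/
noncomputable def fB : Fin n → Fin n := fun x =>
  if hx : x ∈ P then nextP e ⟨x, hx⟩ else h x

lemma fB_of_not_mem {x : Fin n} (hx : x ∉ P) : fB e h x = h x := dif_neg hx

lemma fB_of_mem {x : Fin n} (hx : x ∈ P) : fB e h x = nextP e ⟨x, hx⟩ := dif_pos hx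

lemma nextP_apply (i : Fin P.card) :
    nextP e (e i) =
      if hlt : i.1 + 1 < P.card then (e ⟨i.1 + 1, hlt⟩).1 else (e i).1 := by
  simp only [nextP, Equiv.symm_apply_apply]

lemma fB_apply_e (i : Fin P.card) :
    fB e h (e i).1 =
      if hlt : i.1 + 1 < P.card then (e ⟨i.1 + 1, hlt⟩).1 else (e i).1 := by
  rw [fB_of_mem e h (e i).2, Subtype.coe_eta, nextP_apply]

lemma fB_climb : ∀ (j : ℕ) (i : Fin P.card) (hij : i.1 + j < P.card),
    (fB e h)^[j] (e i).1 = (e ⟨i.1 + j, hij⟩).1 := by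
  intro j
  induction j with
  | zero =>
    intro i hij
    rw [iterate_zero_apply]
    exact congrArg (fun j : Fin P.card => (e j).1) (Fin.ext (Nat.add_zero i.1).symm)
  | succ j ih =>
    intro i hij
    have hlt : i.1 + 1 < P.card := by omega
    rw [iterate_succ_apply, fB_apply_e e h i, dif_pos hlt,
      ih ⟨i.1 + 1, hlt⟩ (show i.1 + 1 + j < P.card by omega)]
    exact congrArg (fun j : Fin P.card => (e j).1)
      (Fin.ext (show i.1 + 1 + j = i.1 + (j + 1) by omega))

lemma fB_grounded (hP : 0 < P.card) (hreach : ∀ x, ∃ m, h^[m] x ∈ P) :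
    Grounded (e ⟨P.card - 1, by omega⟩).1 (fB e h) := by
  have hroot : fB e h (e ⟨P.card - 1, by omega⟩).1 = (e ⟨P.card - 1, by omega⟩).1 := by
    rw [fB_apply_e, dif_neg (show ¬(P.card - 1 + 1 < P.card) by omega)]
  have hmemreach : ∀ (x : Fin n), x ∈ P → ∃ k, (fB e h)^[k] x = (e ⟨P.card - 1, by omega⟩).1 := by
    intro x hx
    set i := e.symm ⟨x, hx⟩ with hi
    have hxi : (e i).1 = x := by rw [hi, Equiv.apply_symm_apply]
    have hik : i.1 + (P.card - 1 - i.1) < P.card := by have := i.2; omega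
    refine ⟨P.card - 1 - i.1, ?_⟩
    rw [← hxi, fB_climb e h _ i hik]
    exact congrArg (fun j : Fin P.card => (e j).1)
      (Fin.ext (show i.1 + (P.card - 1 - i.1) = P.card - 1 by have := i.2; omega))
  constructor
  · exact hroot
  · have key : ∀ m x, h^[m] x ∈ P → ∃ k, (fB e h)^[k] x = (e ⟨P.card - 1, by omega⟩).1 := by
      intro m
      induction m with
      | zero => intro x hx; exact hmemreach x hx
      | succ m ih =>
        intro x hx
        by_cases hxP : x ∈ P
        · exact hmemreach x hxP
        · obtain ⟨k, hk⟩ := ih (h x) (by rwa [← iterate_succ_apply])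
          exact ⟨k + 1, by rwa [iterate_succ_apply, fB_of_not_mem e h hxP]⟩
    intro x
    obtain ⟨m, hm⟩ := hreach x
    exact key m x hm

end InvSide

/-- Joyal, side B: grounded triples are classified by the middle type. -/
noncomputable def equivB (hn : 0 < n) : GT n ≃ Mid n where
  toFun t := ⟨orbP t.1.2.1 t.1.2.2 t.1.1,
    ⟨orbEquiv t.2 t.1.1,
      ⟨hB t.1.2.1 t.1.2.2 t.1.1,
        fun x hx => if_pos hx,
        fun x => by
          obtain ⟨k, hk⟩ := t.2.2 x
          exact hB_reach t.2 t.1.1 k x hk⟩⟩⟩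
  invFun M :=
    if hP : 0 < M.1.card then
      ⟨((M.2.1 ⟨0, hP⟩).1, (M.2.1 ⟨M.1.card - 1, by omega⟩).1, fB M.2.1 M.2.2.1),
        fB_grounded M.2.1 M.2.2.1 hP M.2.2.2.2⟩
    else
      ⟨(⟨0, hn⟩, ⟨0, hn⟩, fun _ => ⟨0, hn⟩), ⟨rfl, fun _ => ⟨1, rfl⟩⟩⟩
  left_inv t := by
    obtain ⟨⟨b, r, f⟩, hg⟩ := t
    have hcard : (orbP r f b).card = ht r f b + 1 := orbP_card hg b
    have hP : 0 < (orbP r f b).card := by omega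
    dsimp only
    erw [dif_pos hP]
    apply Subtype.ext
    dsimp only
    have hb : ((orbEquiv hg b) ⟨0, hP⟩).1 = b := by
      show f^[(0 : ℕ)] b = b
      rfl
    have hr : ((orbEquiv hg b) ⟨(orbP r f b).card - 1,
        (show (orbP r f b).card - 1 < (orbP r f b).card by omega)⟩).1 = r := by
      show f^[(orbP r f b).card - 1] b = r
      rw [hcard]
      exact ht_spec (hg.2 b)
    have hf : fB (orbEquiv hg b) (hB r f b) = f := by
      funext x
      by_cases hx : x ∈ orbP r f b
      · rw [fB_of_mem _ _ hx]
        set i := (orbEquiv hg b).symm ⟨x, hx⟩ with hidef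
        have hxi : ((orbEquiv hg b) i).1 = x := by rw [hidef, Equiv.apply_symm_apply]
        have hxval : f^[i.1] b = x := hxi
        rw [show (⟨x, hx⟩ : {y // y ∈ orbP r f b}) = (orbEquiv hg b) i from
          Subtype.ext hxi.symm, nextP_apply]
        by_cases hlt : i.1 + 1 < (orbP r f b).card
        · rw [dif_pos hlt]
          show f^[i.1 + 1] b = f x
          rw [iterate_succ_apply', hxval]
        · rw [dif_neg hlt]
          have hi2 : i.1 < (orbP r f b).card := i.2
          have hieq : i.1 = ht r f b := by omega
          have hxr : x = r := by rw [← hxval, hieq]; exact ht_spec (hg.2 b)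
          rw [hxi, hxr]
          exact hg.1.symm
      · rw [fB_of_not_mem _ _ hx, show hB r f b x = f x from if_neg hx]
    rw [hb, hr, hf]
  right_inv M := by
    obtain ⟨P, e, h, hfix, hreach⟩ := M
    by_cases hP : 0 < P.card
    case neg =>
      exfalso
      obtain ⟨m, hm⟩ := hreach ⟨0, hn⟩
      have hPe : P = ∅ := Finset.card_eq_zero.mp (by omega)
      rw [hPe] at hm
      exact Finset.notMem_empty _ hm
    dsimp only
    erw [dif_pos hP]
    dsimp only
    set b := (e ⟨0, hP⟩).1 with hbdef
    set r := (e ⟨P.card - 1, by omega⟩).1 with hrdef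
    set f := fB e h with hfdef
    have hgr : Grounded r f := fB_grounded e h hP hreach
    -- C1 : iterates of b enumerate P
    have C1 : ∀ (i : ℕ) (hi : i < P.card), f^[i] b = (e ⟨i, hi⟩).1 := by
      intro i hi
      rw [hbdef, hfdef, fB_climb e h i ⟨0, hP⟩ (show 0 + i < P.card by omega)]
      exact congrArg (fun j : Fin P.card => (e j).1) (Fin.ext (show 0 + i = i by omega))
    -- C2 : the height of b is P.card - 1
    have C2 : ht r f b = P.card - 1 := by
      have hle : ht r f b ≤ P.card - 1 := ht_le (by
        rw [C1 (P.card - 1) (by omega)])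
      rcases Nat.lt_or_ge (ht r f b) (P.card - 1) with hlt | hge
      · exfalso
        have h1 : f^[ht r f b] b = r := ht_spec (hgr.2 b)
        rw [C1 (ht r f b) (by omega)] at h1
        have h2 : (⟨ht r f b, by omega⟩ : Fin P.card) = ⟨P.card - 1, by omega⟩ :=
          e.injective (Subtype.ext h1)
        have := congrArg Fin.val h2
        simp only at this
        omega
      · omega
    -- C3 : the orbit of b is P
    have C3 : orbP r f b = P := by
      ext y
      rw [mem_orbP_iff, C2]
      constructor
      · rintro ⟨i, hi, hiy⟩
        rw [C1 i (by omega)] at hiy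
        exact hiy ▸ (e ⟨i, by omega⟩).2
      · intro hy
        set i := e.symm ⟨y, hy⟩ with hidef
        refine ⟨i.1, by have := i.2; omega, ?_⟩
        rw [C1 i.1 i.2]
        show ((e ⟨i.1, i.2⟩).1 : Fin n) = y
        rw [show (⟨i.1, i.2⟩ : Fin P.card) = i from Fin.ext rfl, hidef,
          Equiv.apply_symm_apply]
      -- done
    refine mid_ext C3 ?_ ?_
    · intro i hi hi'
      show f^[i] b = (e ⟨i, hi'⟩).1
      exact C1 i hi'
    · show hB r f b = h
      funext x
      by_cases hx : x ∈ P
      · rw [show hB r f b x = x from if_pos (C3 ▸ hx), hfix x hx]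
      · rw [show hB r f b x = f x from if_neg (fun hc => hx (C3 ▸ hc)),
          hfdef, fB_of_not_mem e h hx]

/-- Grounded triples are a marked vertex, a root, and a tree. -/
noncomputable def gtEquivTriple :
    GT n ≃ Fin n × Fin n × {T : SimpleGraph (Fin n) // T.IsTree} where
  toFun t := (t.1.1, t.1.2.1, (treeEquivGrounded t.1.2.1).symm ⟨t.1.2.2, t.2⟩)
  invFun x := ⟨(x.1, x.2.1, ((treeEquivGrounded x.2.1) x.2.2).1),
    ((treeEquivGrounded x.2.1) x.2.2).2⟩
  left_inv t := by
    obtain ⟨⟨b, r, f⟩, hg⟩ := t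
    apply Subtype.ext
    show (b, r, ((treeEquivGrounded r) ((treeEquivGrounded r).symm ⟨f, hg⟩)).1) = (b, r, f)
    rw [Equiv.apply_symm_apply]
  right_inv x := by
    obtain ⟨b, r, T⟩ := x
    show (b, r, (treeEquivGrounded r).symm ⟨((treeEquivGrounded r) T).1,
      ((treeEquivGrounded r) T).2⟩) = (b, r, T)
    rw [Subtype.coe_eta, Equiv.symm_apply_apply]

theorem card_trees (hn : 0 < n) :
    n * (n * Nat.card {T : SimpleGraph (Fin n) // T.IsTree}) = n ^ n := by
  have h1 : Nat.card (GT n) = Nat.card (Fin n → Fin n) :=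
    Nat.card_congr ((equivB hn).trans (equivA hn).symm)
  have h2 : Nat.card (GT n) =
      n * (n * Nat.card {T : SimpleGraph (Fin n) // T.IsTree}) := by
    rw [Nat.card_congr gtEquivTriple, Nat.card_prod, Nat.card_prod]
    simp [Nat.card_eq_fintype_card]
  have h3 : Nat.card (Fin n → Fin n) = n ^ n := by
    simp [Nat.card_fun]
  rw [← h2, h1, h3]

end Cayley

/-- **Cayley's formula** (Corollary 3): the number of spanning trees of the complete
graph on `n` vertices — i.e. the number of tree graphs on the vertex set `Fin n` —
is `n ^ (n − 2)`. -/
theorem card_spanning_trees_complete_graph (n : ℕ) (hn : 1 ≤ n) :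
    Nat.card {T : SimpleGraph (Fin n) // T.IsTree} = n ^ (n - 2) := by
  have key := Cayley.card_trees (n := n) hn
  have hpow : n ^ n = n * (n * n ^ (n - 2)) := by
    match n, hn with
    | 1, _ => norm_num
    | (m + 2), _ =>
      have : m + 2 - 2 = m := by omega
      rw [this]
      ring
  rw [hpow] at key
  have h1 := Nat.eq_of_mul_eq_mul_left hn key
  exact Nat.eq_of_mul_eq_mul_left hn h1
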